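/- For the constant α = Σ_{k=1}^∞ 1/(3^k 2^(3^k)) and any positive integer n, writing x_n = frac(2^n · α), if 3^m ≤ n < 3^(m+1) then x_n = frac(2^n · Σ_{k=1}^m 1/(3^k 2^(3^k))) + Σ_{k=m+1}^∞ 2^n/(3^k 2^(3^k)), where the tail term Σ_{k=m+1}^∞ 2^(n - 3^k)/3^k is strictly less than 2^(n - 3^(m+1)) · (3/(2·3^(m+1))). -/

import Mathlib

/-- Decomposition of the shifted binary expansion of `α = Σ_{k≥1} 1/(3^k 2^(3^k))`:
if `3^m ≤ n < 3^(m+1)` then `frac(2^n α)` equals `frac` of the shifted partial sum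
plus the tail `Σ_{k=m+1}^∞ 2^(n-3^k)/3^k`, and the tail is strictly less than
`2^(n - 3^(m+1)) · (3 / (2 · 3^(m+1)))`. -/
theorem shifted_expansion_decomposition (m n : ℕ) (hn : 3 ^ m ≤ n) (hn' : n < 3 ^ (m + 1)) :
    Int.fract ((2 : ℝ) ^ n * ∑' k : ℕ, (1 : ℝ) / (3 ^ (k + 1) * 2 ^ (3 ^ (k + 1)))) =
        Int.fract ((2 : ℝ) ^ n * ∑ k ∈ Finset.range m, (1 : ℝ) / (3 ^ (k + 1) * 2 ^ (3 ^ (k + 1)))) +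
          ∑' k : ℕ, (2 : ℝ) ^ ((n : ℤ) - 3 ^ (m + 1 + k)) / 3 ^ (m + 1 + k) ∧
      (∑' k : ℕ, (2 : ℝ) ^ ((n : ℤ) - 3 ^ (m + 1 + k)) / 3 ^ (m + 1 + k)) <
        (2 : ℝ) ^ ((n : ℤ) - 3 ^ (m + 1)) * (3 / (2 * 3 ^ (m + 1))) := by
  classical
  set f : ℕ → ℝ := fun k => (1 : ℝ) / (3 ^ (k + 1) * 2 ^ (3 ^ (k + 1))) with hfdef
  set g : ℕ → ℝ := fun k => (2 : ℝ) ^ ((n : ℤ) - 3 ^ (m + 1 + k)) / 3 ^ (m + 1 + k) with hgdef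
  set F : ℝ := (2 : ℝ) ^ ((n : ℤ) - 3 ^ (m + 1)) / 3 ^ (m + 1) with hFdef
  have hF_pos : 0 < F := by rw [hFdef]; positivity
  -- key pointwise identity
  have key : ∀ j : ℕ, (2 : ℝ) ^ n * ((1 : ℝ) / (3 ^ j * 2 ^ (3 ^ j))) =
      (2 : ℝ) ^ ((n : ℤ) - (3 : ℤ) ^ j) / (3 : ℝ) ^ j := by
    intro j
    have h1 : (2 : ℝ) ^ ((n : ℤ) - (3 : ℤ) ^ j) = 2 ^ n / 2 ^ (3 ^ j) := by
      rw [zpow_sub₀ (two_ne_zero), show ((3 : ℤ) ^ j) = ((3 ^ j : ℕ) : ℤ) by push_cast; ring,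
        zpow_natCast, zpow_natCast]
    rw [h1]
    have h2 : (0 : ℝ) < 2 ^ (3 ^ j) := by positivity
    have h3 : (0 : ℝ) < (3 : ℝ) ^ j := by positivity
    field_simp
  -- summability of f
  have hf_sum : Summable f := by
    apply Summable.of_nonneg_of_le (fun k => by rw [hfdef]; positivity) (fun k => ?_)
      (summable_geometric_of_lt_one (by norm_num) (by norm_num : (1 / 2 : ℝ) < 1))
    have hk : k ≤ 3 ^ (k + 1) := by
      have h1 := Nat.lt_pow_self (a := 3) (n := k) (by norm_num)
      have h2 : 3 ^ k ≤ 3 ^ (k + 1) := Nat.pow_le_pow_right (by norm_num) (Nat.le_succ k)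
      omega
    have h1 : (2 : ℝ) ^ k ≤ 3 ^ (k + 1) * 2 ^ (3 ^ (k + 1)) := by
      calc (2 : ℝ) ^ k ≤ 2 ^ (3 ^ (k + 1)) := by
            exact pow_le_pow_right₀ one_le_two hk
        _ ≤ 3 ^ (k + 1) * 2 ^ (3 ^ (k + 1)) := by
            nlinarith [pow_pos (by norm_num : (0:ℝ) < 2) (3 ^ (k + 1)),
              one_le_pow₀ (by norm_num : (1:ℝ) ≤ 3) (n := k + 1)]
    calc f k = 1 / (3 ^ (k + 1) * 2 ^ (3 ^ (k + 1))) := rfl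
      _ ≤ 1 / 2 ^ k := by
          apply one_div_le_one_div_of_le (by positivity) h1
      _ = (1 / 2) ^ k := by rw [div_pow, one_pow]
  -- termwise bound on g
  have hg_nonneg : ∀ k, 0 ≤ g k := fun k => by rw [hgdef]; positivity
  have hgle : ∀ k, g k ≤ F * (1 / 6) ^ k := by
    intro k
    have hk3 : (k : ℤ) + 3 ^ (m + 1) ≤ 3 ^ (m + 1 + k) := by
      have h1 : k + 3 ^ (m + 1) ≤ 3 ^ (m + 1 + k) := by
        have hk1 : k + 1 ≤ 3 ^ k := Nat.lt_pow_self (a := 3) (n := k) (by norm_num)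
        calc k + 3 ^ (m + 1) ≤ 3 ^ (m + 1) * (k + 1) := by nlinarith [Nat.one_le_two_pow (n := m), Nat.one_le_pow (m+1) 3 (by norm_num)]
          _ ≤ 3 ^ (m + 1) * 3 ^ k := by exact Nat.mul_le_mul_left _ hk1
          _ = 3 ^ (m + 1 + k) := (pow_add 3 (m+1) k).symm
      exact_mod_cast h1
    have h2 : (2 : ℝ) ^ ((n : ℤ) - 3 ^ (m + 1 + k)) ≤
        (2 : ℝ) ^ ((n : ℤ) - 3 ^ (m + 1)) * (1 / 2 : ℝ) ^ k := by
      have he : ((n : ℤ) - 3 ^ (m + 1 + k)) ≤ ((n : ℤ) - 3 ^ (m + 1)) - k := by linarith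
      calc (2 : ℝ) ^ ((n : ℤ) - 3 ^ (m + 1 + k)) ≤ (2 : ℝ) ^ (((n : ℤ) - 3 ^ (m + 1)) - (k : ℤ)) :=
            zpow_le_zpow_right₀ one_le_two he
        _ = (2 : ℝ) ^ ((n : ℤ) - 3 ^ (m + 1)) * (1 / 2 : ℝ) ^ k := by
            rw [zpow_sub₀ (two_ne_zero), zpow_natCast]; rw [one_div, inv_pow, div_eq_mul_inv]
    have hden : (3 : ℝ) ^ (m + 1 + k) = 3 ^ (m + 1) * 3 ^ k := pow_add 3 (m+1) k
    have hrhs : F * (1 / 6) ^ k =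
        ((2 : ℝ) ^ ((n : ℤ) - 3 ^ (m + 1)) * (1 / 2 : ℝ) ^ k) / (3 ^ (m + 1) * 3 ^ k) := by
      rw [hFdef]
      have h6 : ((1:ℝ)/6) ^ k = (1/2:ℝ)^k * ((1:ℝ)/3)^k := by
        rw [← mul_pow]; norm_num
      rw [h6]
      have h3 : ((1:ℝ)/3) ^ k = 1 / 3 ^ k := by rw [div_pow, one_pow]
      rw [h3]
      ring
    rw [hgdef, hrhs]
    simp only
    rw [hden]
    gcongr
  have hgeo_sum : Summable (fun k : ℕ => F * (1 / 6 : ℝ) ^ k) :=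
    (summable_geometric_of_lt_one (by norm_num) (by norm_num)).mul_left F
  have hg_sum : Summable g := Summable.of_nonneg_of_le hg_nonneg hgle hgeo_sum
  set T : ℝ := ∑' k, g k with hTdef
  have hT0 : 0 ≤ T := tsum_nonneg hg_nonneg
  -- tail bound
  have hT_le : T ≤ F * (6 / 5) := by
    have h1 : T ≤ ∑' k : ℕ, F * (1 / 6 : ℝ) ^ k := Summable.tsum_le_tsum hgle hg_sum hgeo_sum
    have h2 : ∑' k : ℕ, F * (1 / 6 : ℝ) ^ k = F * (6 / 5) := by
      rw [tsum_mul_left, tsum_geometric_of_lt_one (by norm_num) (by norm_num)]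
      norm_num
    linarith
  have hT_lt : T < (2 : ℝ) ^ ((n : ℤ) - 3 ^ (m + 1)) * (3 / (2 * 3 ^ (m + 1))) := by
    have hB : (2 : ℝ) ^ ((n : ℤ) - 3 ^ (m + 1)) * (3 / (2 * 3 ^ (m + 1))) = F * (3 / 2) := by
      rw [hFdef]; field_simp
    rw [hB]
    have : F * (6 / 5) < F * (3 / 2) := by nlinarith
    linarith
  -- the tail is small:  T < 1/3^m
  have hT_small : T < 1 / 3 ^ m := by
    have hexp : (n : ℤ) - 3 ^ (m + 1) ≤ -1 := by
      have : (n : ℤ) < 3 ^ (m + 1) := by exact_mod_cast hn'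
      omega
    have h2 : (2 : ℝ) ^ ((n : ℤ) - 3 ^ (m + 1)) ≤ (2 : ℝ) ^ (-1 : ℤ) :=
      zpow_le_zpow_right₀ one_le_two hexp
    have h3 : (2 : ℝ) ^ (-1 : ℤ) = 1 / 2 := by norm_num
    have h4 : (0 : ℝ) < 3 ^ (m + 1) := by positivity
    have h5 : (2 : ℝ) ^ ((n : ℤ) - 3 ^ (m + 1)) * (3 / (2 * 3 ^ (m + 1))) ≤
        (1 / 2) * (3 / (2 * 3 ^ (m + 1))) := by
      rw [← h3] at *
      apply mul_le_mul_of_nonneg_right h2 (by positivity)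
    have h3m : (0 : ℝ) < 3 ^ m := by positivity
    have h6 : ((1 : ℝ) / 2) * (3 / (2 * 3 ^ (m + 1))) < 1 / 3 ^ m := by
      have he : ((1 : ℝ) / 2) * (3 / (2 * 3 ^ (m + 1))) = 1 / (4 * 3 ^ m) := by
        rw [pow_succ]; field_simp; ring
      rw [he]
      exact one_div_lt_one_div_of_lt h3m (by nlinarith)
    linarith [hT_lt]
  -- integrality of 3^m * A
  set A : ℝ := (2 : ℝ) ^ n * ∑ k ∈ Finset.range m, f k with hAdef
  have hA_rat : ∃ z : ℕ, (3 : ℝ) ^ m * A = z := by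
    refine ⟨∑ k ∈ Finset.range m, 3 ^ (m - (k + 1)) * 2 ^ (n - 3 ^ (k + 1)), ?_⟩
    push_cast
    rw [hAdef, Finset.mul_sum, Finset.mul_sum]
    apply Finset.sum_congr rfl
    intro k hk
    have hk' : k + 1 ≤ m := Finset.mem_range.mp hk
    have h3 : 3 ^ (k + 1) ≤ n :=
      le_trans (Nat.pow_le_pow_right (by norm_num) hk') hn
    have e1 : (3 : ℝ) ^ m = 3 ^ (m - (k + 1)) * 3 ^ (k + 1) := by
      rw [← pow_add, Nat.sub_add_cancel hk']
    have e2 : (2 : ℝ) ^ n = 2 ^ (n - 3 ^ (k + 1)) * 2 ^ (3 ^ (k + 1)) := by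
      rw [← pow_add, Nat.sub_add_cancel h3]
    rw [hfdef]
    simp only
    rw [e1, e2]
    have p1 : (0 : ℝ) < 3 ^ (k + 1) := by positivity
    have p2 : (0 : ℝ) < 2 ^ (3 ^ (k + 1)) := by positivity
    field_simp
  -- fract A ≤ 1 - 1/3^m
  have hfracA : Int.fract A ≤ 1 - 1 / 3 ^ m := by
    obtain ⟨z, hz⟩ := hA_rat
    have h3m : (0 : ℝ) < 3 ^ m := by positivity
    set q : ℤ := (z : ℤ) - 3 ^ m * ⌊A⌋ with hqdef
    have hq : (3 : ℝ) ^ m * Int.fract A = (q : ℝ) := by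
      rw [hqdef]
      push_cast
      rw [Int.fract]
      linarith [hz]
    have hq0 : (0 : ℝ) ≤ (q : ℝ) := by
      rw [← hq]; exact mul_nonneg (le_of_lt h3m) (Int.fract_nonneg A)
    have hqlt : (q : ℝ) < 3 ^ m := by
      rw [← hq]
      nlinarith [Int.fract_lt_one A]
    have hqle : (q : ℝ) ≤ 3 ^ m - 1 := by
      have c1 : q < (3 : ℤ) ^ m := by exact_mod_cast hqlt
      have c2 : q ≤ (3 : ℤ) ^ m - 1 := by omega
      calc (q : ℝ) ≤ ((3 : ℤ) ^ m - 1 : ℤ) := by exact_mod_cast c2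
        _ = 3 ^ m - 1 := by push_cast; ring
    have hfr : Int.fract A = (q : ℝ) / 3 ^ m := by
      field_simp
      linarith [hq]
    rw [hfr, div_le_iff₀ h3m]
    have hinv : (1 / 3 ^ m : ℝ) * 3 ^ m = 1 := by field_simp
    nlinarith [hqle]
  -- split the tsum
  have hsplit : ∑ k ∈ Finset.range m, f k + ∑' k, f (k + m) = ∑' k, f k :=
    Summable.sum_add_tsum_nat_add m hf_sum
  have htail : (2 : ℝ) ^ n * ∑' k, f (k + m) = T := by
    rw [hTdef, ← tsum_mul_left]
    apply tsum_congr
    intro k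
    have hidx : k + m + 1 = m + 1 + k := by ring
    have := key (k + m + 1)
    rw [hidx] at this
    rw [hfdef, hgdef]
    simp only
    rw [hidx]
    exact this
  have hmain : (2 : ℝ) ^ n * ∑' k, f k = A + T := by
    rw [← hsplit, mul_add, htail, hAdef]
  -- combine
  have hlt1 : Int.fract A + T < 1 := by
    have : T < 1 / 3 ^ m := hT_small
    linarith
  have hfr_eq : Int.fract ((2 : ℝ) ^ n * ∑' k, f k) = Int.fract A + T := by
    rw [hmain]
    conv_lhs => rw [← Int.floor_add_fract A, add_assoc]
    rw [Int.fract_intCast_add, Int.fract_eq_self.mpr ⟨add_nonneg (Int.fract_nonneg A) hT0, hlt1⟩]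
  exact ⟨hfr_eq, hT_lt⟩
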